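/- arXiv:1111.0595 — 5 statements merged into one kernel-verified Lean document; each statement's English description precedes it below -/
import Mathlib

section
/- (Rate Increase Lemma, single-step version) Let F be a field, H11 : Matrix (Fin m) (Fin n) F, and B : Matrix (Fin m) (Fin p) F, and M1 : Matrix (Fin n) (Fin r1) F a full column rank matrix with rank([H11·M1 B]) = r1 + rank(B). If rank([H11 B]) > r1 + rank(B), then there exists a vector α ∈ F^n such that the augmented matrix M1' = [α M1] (adjoining α as a new column) has full column rank r1 + 1 and rank([H11·M1' B]) = r1 + 1 + rank(B). -/
open Matrix Submodule FiniteDimensional Module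

/-- Column span of a matrix. -/
noncomputable def colSpan {F : Type*} [Field F] {m k : Type*} (A : Matrix m k F) :
    Submodule F (m → F) := Submodule.span F (Set.range Aᵀ)

lemma rank_eq_colSpan {F : Type*} [Field F] {m k : Type*} [Fintype k] [Fintype m]
    (A : Matrix m k F) : A.rank = Module.finrank F (colSpan A) :=
  A.rank_eq_finrank_span_cols

lemma colSpan_fromColumns {F : Type*} [Field F] {m k l : Type*}
    (A : Matrix m k F) (B : Matrix m l F) :
    colSpan (Matrix.fromCols A B) = colSpan A ⊔ colSpan B := by
  unfold colSpan
  rw [← Submodule.span_union, Matrix.transpose_fromCols]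
  congr 1
  show Set.range (Sum.elim Aᵀ Bᵀ) = _
  exact Set.Sum.elim_range _ _

lemma colSpan_one_col {F : Type*} [Field F] {m : Type*} (α : m → F) :
    colSpan (Matrix.of fun i (_ : Fin 1) => α i) = Submodule.span F {α} := by
  unfold colSpan
  congr 1
  have : (Matrix.of fun i (_ : Fin 1) => α i)ᵀ = fun _ => α := rfl
  rw [this, Set.range_const]

lemma finrank_span_singleton_sup {F : Type*} [Field F] {m : ℕ} (v : Fin m → F)
    (S : Submodule F (Fin m → F)) (hv : v ∉ S) :
    Module.finrank F ↥(Submodule.span F {v} ⊔ S) = Module.finrank F S + 1 := by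
  have hv0 : v ≠ 0 := fun h => hv (h ▸ S.zero_mem)
  have hdisj : Disjoint S (Submodule.span F {v}) :=
    (Submodule.disjoint_span_singleton' hv0).mpr hv
  have h := Submodule.finrank_sup_add_finrank_inf_eq (Submodule.span F {v}) S
  rw [disjoint_comm] at hdisj
  rw [hdisj.eq_bot, finrank_bot, add_zero, finrank_span_singleton hv0] at h
  omega

/-- Rate Increase Lemma (single step): if `M1` has full column rank `r1`,
`rank [H11·M1 B] = r1 + rank B`, and `rank [H11 B] > r1 + rank B`, then one can adjoin
a column `α` to `M1` obtaining `M1'` of full column rank `r1 + 1` with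
`rank [H11·M1' B] = r1 + 1 + rank B`. -/
theorem stmt_5 {F : Type*} [Field F] {m n p r1 : ℕ}
    (H11 : Matrix (Fin m) (Fin n) F) (B : Matrix (Fin m) (Fin p) F)
    (M1 : Matrix (Fin n) (Fin r1) F)
    (hM1 : M1.rank = r1)
    (hr : (Matrix.fromCols (H11 * M1) B).rank = r1 + B.rank)
    (hgt : (Matrix.fromCols H11 B).rank > r1 + B.rank) :
    ∃ α : Fin n → F,
      (Matrix.fromCols (Matrix.of fun i (_ : Fin 1) => α i) M1).rank = r1 + 1 ∧
      (Matrix.fromCols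
        (H11 * Matrix.fromCols (Matrix.of fun i (_ : Fin 1) => α i) M1) B).rank
          = r1 + 1 + B.rank := by
  set W : Submodule F (Fin m → F) := colSpan (H11 * M1) ⊔ colSpan B with hW
  -- find a column of H11 not in W
  have hex : ∃ j : Fin n, H11ᵀ j ∉ W := by
    by_contra h
    push_neg at h
    have hle : colSpan H11 ≤ W := Submodule.span_le.mpr (by rintro _ ⟨j, rfl⟩; exact h j)
    have hle2 : colSpan H11 ⊔ colSpan B ≤ W := sup_le hle le_sup_right
    have h1 := Submodule.finrank_mono hle2
    have h2 : (Matrix.fromCols H11 B).rank = Module.finrank F ↥(colSpan H11 ⊔ colSpan B) := by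
      rw [← colSpan_fromColumns, ← rank_eq_colSpan]
    have h3 : Module.finrank F ↥W = r1 + B.rank := by
      show Module.finrank F ↥(colSpan (H11 * M1) ⊔ colSpan B) = _
      rw [← colSpan_fromColumns, ← rank_eq_colSpan, hr]
    omega
  obtain ⟨j, hj⟩ := hex
  refine ⟨Pi.single j 1, ?_, ?_⟩
  · -- rank [α M1] = r1 + 1
    have hα : Pi.single j 1 ∉ colSpan M1 := by
      intro hmem
      apply hj
      have hmap : Submodule.map H11.mulVecLin (colSpan M1) ≤ colSpan (H11 * M1) := by
        rw [colSpan, Submodule.map_span, Submodule.span_le]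
        rintro _ ⟨_, ⟨k, rfl⟩, rfl⟩
        apply Submodule.subset_span
        exact ⟨k, by ext i; simp [Matrix.mulVecLin_apply, Matrix.mulVec, Matrix.mul_apply,
          dotProduct, Matrix.transpose_apply]⟩
      have : H11.mulVecLin (Pi.single j 1) ∈ colSpan (H11 * M1) :=
        hmap ⟨_, hmem, rfl⟩
      rw [Matrix.mulVecLin_apply, Matrix.mulVec_single_one] at this
      exact Submodule.mem_sup_left this
    rw [rank_eq_colSpan, colSpan_fromColumns, colSpan_one_col,
      finrank_span_singleton_sup _ _ hα, ← rank_eq_colSpan, hM1]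
  · -- rank [H11 * [α M1] B] = r1 + 1 + rank B
    rw [Matrix.mul_fromCols]
    have hcol : H11 * (Matrix.of fun i (_ : Fin 1) => (Pi.single j 1 : Fin n → F) i) =
        Matrix.of fun i (_ : Fin 1) => H11ᵀ j i := by
      ext i k
      simp [Matrix.mul_apply, Pi.single_apply, mul_ite]
    rw [hcol, rank_eq_colSpan, colSpan_fromColumns, colSpan_fromColumns, colSpan_one_col,
      sup_assoc]
    rw [show colSpan (H11 * M1) ⊔ colSpan B = W from rfl]
    rw [finrank_span_singleton_sup _ _ hj]
    have h3 : Module.finrank F ↥W = r1 + B.rank := by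
      show Module.finrank F ↥(colSpan (H11 * M1) ⊔ colSpan B) = _
      rw [← colSpan_fromColumns, ← rank_eq_colSpan, hr]
    omega
end

section
/- (Rate Increase Lemma) Let F be a field, H11 : Matrix (Fin m) (Fin n) F, B : Matrix (Fin m) (Fin p) F, and M1 : Matrix (Fin n) (Fin r1) F a full column rank matrix with rank([H11·M1 B]) = r1 + R2 where R2 = rank(B). Let r = rank([H11 B]) ≥ r1 + R2. Then for every k with 0 ≤ k ≤ r − r1 − R2 there exists a matrix M1⁽ᵏ⁾ of dimension n × (r1 + k), whose last r1 columns are the columns of M1, such that M1⁽ᵏ⁾ has full column rank and rank([H11·M1⁽ᵏ⁾ B]) = r1 + R2 + k. -/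
open Matrix Submodule Module Set

section Helpers

variable {F : Type*} [Field F] {m n : ℕ}

private lemma col_eq' {ι κ : Type*} (A : Matrix ι κ F) : A.col = Aᵀ := rfl

/-- rank of a column-concatenated matrix as finrank of the sup of column spans -/
private lemma rank_fc {ι κ : Type*} [Fintype ι] [Fintype κ]
    (A : Matrix (Fin m) ι F) (B : Matrix (Fin m) κ F) :
    (Matrix.fromCols A B).rank =
      Module.finrank F ↥(Submodule.span F (Set.range Aᵀ) ⊔ Submodule.span F (Set.range Bᵀ)) := by
  rw [Matrix.rank_eq_finrank_span_cols, col_eq', Matrix.transpose_fromCols]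
  have h : Set.range (Matrix.fromRows Aᵀ Bᵀ) = Set.range Aᵀ ∪ Set.range Bᵀ :=
    Set.Sum.elim_range _ _
  rw [h, Submodule.span_union]

/-- columns of a product as images under `mulVecLin` -/
private lemma cols_mul {ι : Type*} (H : Matrix (Fin m) (Fin n) F)
    (M : Matrix (Fin n) ι F) :
    (H * M)ᵀ = H.mulVecLin ∘ Mᵀ := by
  funext j
  ext i
  simp [Matrix.mul_apply, Matrix.mulVecLin_apply, Matrix.mulVec, dotProduct]
  rfl

private lemma range_cols_mul {ι : Type*} (H : Matrix (Fin m) (Fin n) F)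
    (M : Matrix (Fin n) ι F) :
    Set.range (H * M)ᵀ = H.mulVecLin '' Set.range Mᵀ := by
  rw [cols_mul]; exact Set.range_comp _ _

end Helpers

/-- Rate Increase Lemma: if `M1` has full column rank `r1` and
`rank [H11·M1 B] = r1 + R2` with `R2 = rank B`, and `r = rank [H11 B] ≥ r1 + R2`,
then for every `k ≤ r - r1 - R2` there is a full column rank matrix `M1⁽ᵏ⁾` with
`r1 + k` columns whose last `r1` columns are those of `M1` and with
`rank [H11·M1⁽ᵏ⁾ B] = r1 + R2 + k`. -/
theorem stmt_6 {F : Type*} [Field F] {m n p r1 R2 r : ℕ}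
    (H11 : Matrix (Fin m) (Fin n) F) (B : Matrix (Fin m) (Fin p) F)
    (M1 : Matrix (Fin n) (Fin r1) F)
    (hM1 : M1.rank = r1)
    (hR2 : B.rank = R2)
    (hbase : (Matrix.fromCols (H11 * M1) B).rank = r1 + R2)
    (hr : (Matrix.fromCols H11 B).rank = r)
    (hge : r ≥ r1 + R2) :
    ∀ k, k ≤ r - r1 - R2 →
      ∃ M1k : Matrix (Fin n) (Fin k ⊕ Fin r1) F,
        (∀ i j, M1k i (Sum.inr j) = M1 i j) ∧
        M1k.rank = r1 + k ∧
        (Matrix.fromCols (H11 * M1k) B).rank = r1 + R2 + k := by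
  classical
  set SB : Submodule F (Fin m → F) := Submodule.span F (Set.range Bᵀ) with hSBdef
  have hSB : Module.finrank F SB = R2 := by
    rw [← hR2, Matrix.rank_eq_finrank_span_cols, col_eq']
  -- the matrix built from extra columns `c` and `M1`
  let Mk : ∀ {k : ℕ}, (Fin k → Fin n → F) → Matrix (Fin n) (Fin k ⊕ Fin r1) F :=
    fun {k} c => (Matrix.of (Sum.elim c M1ᵀ))ᵀ
  intro k hk
  -- main induction: produce the extra columns
  obtain ⟨c, hc⟩ : ∃ c : Fin k → Fin n → F,
      (Matrix.fromCols (H11 * Mk c) B).rank = r1 + R2 + k := by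
    induction k with
    | zero =>
      refine ⟨fun a => 0, ?_⟩
      rw [rank_fc, ← hSBdef]
      have hcols : Set.range (H11 * Mk (fun (a : Fin 0) => 0))ᵀ = Set.range (H11 * M1)ᵀ := by
        rw [range_cols_mul, range_cols_mul]
        congr 1
        have : (Mk (fun (a : Fin 0) => 0))ᵀ = Sum.elim (fun (a : Fin 0) (i : Fin n) => 0) M1.col := by
          ext i jj; rfl
        rw [this, Set.Sum.elim_range, Set.range_eq_empty, Set.empty_union, col_eq']
      rw [hcols]
      rw [rank_fc, ← hSBdef] at hbase
      simpa using hbase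
    | succ k ih =>
      obtain ⟨c, hc⟩ := ih (le_trans (Nat.le_succ k) hk)
      -- current span is strictly smaller than that of [H11 B]
      set W : Submodule F (Fin m → F) :=
        Submodule.span F (Set.range (H11 * Mk c)ᵀ) ⊔ SB with hWdef
      have hW : Module.finrank F W = r1 + R2 + k := by rw [← hc, rank_fc]
      set T : Submodule F (Fin m → F) :=
        Submodule.span F (Set.range H11ᵀ) ⊔ SB with hTdef
      have hT : Module.finrank F T = r := by rw [← hr, rank_fc]
      have hWT : W ≤ T := by
        apply sup_le_sup_right
        apply Submodule.span_le.mpr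
        rw [range_cols_mul]
        rintro x ⟨y, -, rfl⟩
        rw [← col_eq', ← Matrix.range_mulVecLin]
        exact LinearMap.mem_range_self _ y
      have hlt : Module.finrank F W < Module.finrank F T := by
        rw [hW, hT]; omega
      have hWltT : W < T := Submodule.lt_of_le_of_finrank_lt_finrank hWT hlt
      -- find a column of H11 outside W
      have hex : ∃ j : Fin n, H11ᵀ j ∉ W := by
        by_contra hcon
        push_neg at hcon
        apply hWltT.ne
        refine le_antisymm hWltT.le (sup_le ?_ le_sup_right)
        exact Submodule.span_le.mpr (by rintro x ⟨j, rfl⟩; exact hcon j)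
      obtain ⟨j, hj⟩ := hex
      set u : Fin n → F := Pi.single j 1 with hudef
      have hu : H11 *ᵥ u = H11ᵀ j := Matrix.mulVec_single_one H11 j
      refine ⟨Fin.cons u c, ?_⟩
      -- span of new columns
      have hnew : Submodule.span F (Set.range (H11 * Mk (Fin.cons u c))ᵀ) =
          Submodule.span F {H11ᵀ j} ⊔ Submodule.span F (Set.range (H11 * Mk c)ᵀ) := by
        rw [range_cols_mul, range_cols_mul]
        have h1 : (Mk (Fin.cons u c))ᵀ = Sum.elim (Fin.cons u c) M1.col := by
          ext i jj; rfl
        have h2 : (Mk c)ᵀ = Sum.elim c M1.col := by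
          ext i jj; rfl
        rw [h1, h2, Set.Sum.elim_range, Set.Sum.elim_range, Fin.range_cons,
          Set.insert_union, Set.image_insert_eq, Submodule.span_insert,
          Matrix.mulVecLin_apply, hu]
      rw [rank_fc, ← hSBdef, hnew, sup_assoc, ← hWdef]
      -- finrank of span{x} ⊔ W is finrank W + 1
      have hxle : Module.finrank F ↥(Submodule.span F {H11ᵀ j} ⊔ W) ≤
          Module.finrank F W + 1 := by
        have h1 := Submodule.finrank_add_le_finrank_add_finrank
          (Submodule.span F {H11ᵀ j}) W
        have h2 : Module.finrank F ↥(Submodule.span F ({H11ᵀ j} : Set (Fin m → F))) ≤ 1 := by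
          simpa using finrank_span_le_card ({H11ᵀ j} : Set (Fin m → F))
        omega
      have hxgt : Module.finrank F W <
          Module.finrank F ↥(Submodule.span F {H11ᵀ j} ⊔ W) := by
        apply Submodule.finrank_lt_finrank_of_lt
        refine lt_of_le_of_ne le_sup_right ?_
        intro h
        apply hj
        rw [h]
        exact Submodule.mem_sup_left (Submodule.mem_span_singleton_self _)
      rw [hW] at hxle hxgt
      omega
  -- now derive the full-column-rank statement from the rank of the concatenation
  have hTc : (Mk c)ᵀ = Sum.elim c M1.col := by ext i jj; rfl
  set W1 : Submodule F (Fin m → F) := Submodule.span F (Set.range (H11 * Mk c)ᵀ) with hW1def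
  have hsup : Module.finrank F ↥(W1 ⊔ SB) = r1 + R2 + k := by rw [← hc, rank_fc]
  have hle1 : Module.finrank F ↥(W1 ⊔ SB) ≤ Module.finrank F W1 + R2 := by
    have := Submodule.finrank_add_le_finrank_add_finrank W1 SB
    omega
  have hub : Module.finrank F W1 ≤ k + r1 := by
    have := finrank_range_le_card (R := F) ((H11 * Mk c)ᵀ)
    simpa [Set.finrank, hW1def] using this
  have hW1 : Module.finrank F W1 = k + r1 := by omega
  have hli : LinearIndependent F ((H11 * Mk c)ᵀ) := by
    apply linearIndependent_iff_card_eq_finrank_span.mpr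
    simp [Set.finrank, ← hW1def, hW1]
    exact hW1.symm
  have hli2 : LinearIndependent F ((Mk c)ᵀ) := by
    apply LinearIndependent.of_comp H11.mulVecLin
    rwa [← cols_mul]
  have hrk : (Mk c).rank = r1 + k := by
    rw [Matrix.rank_eq_finrank_span_cols, col_eq', finrank_span_eq_card hli2]
    simp [add_comm]
  exact ⟨Mk c, fun i jj => rfl, hrk, hc⟩
end

section
/- (Rate Exchange Lemma) Let F be a field. Suppose rank([H11·M1 H12·M2]) = rank([H11 H12·M2]) = r, where M1 is a full-column-rank matrix with r − R2 columns and M2 is a full-column-rank matrix with R2 ≥ 1 columns. Suppose M1' = [α M1] (M1 augmented by one column α) satisfies rank(H11·M1') = r − R2 + 1. Then there exists a matrix M2' consisting of R2 − 1 of the columns of M2, with full column rank, such that span(H11·M1') ∩ span(H12·M2') = {0}. -/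
open Matrix Module Submodule

lemma range_fromColumns_mulVecLin {F : Type*} [Field F] {m p q : ℕ}
    (A : Matrix (Fin m) (Fin p) F) (B : Matrix (Fin m) (Fin q) F) :
    LinearMap.range (Matrix.fromCols A B).mulVecLin
      = LinearMap.range A.mulVecLin ⊔ LinearMap.range B.mulVecLin := by
  apply le_antisymm
  · rintro x ⟨v, rfl⟩
    have hv : v = Sum.elim (v ∘ Sum.inl) (v ∘ Sum.inr) := by
      funext i; cases i <;> rfl
    rw [Matrix.mulVecLin_apply, hv, Matrix.fromCols_mulVec_sumElim]
    exact Submodule.add_mem_sup ⟨v ∘ Sum.inl, rfl⟩ ⟨v ∘ Sum.inr, rfl⟩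
  · rw [sup_le_iff]
    constructor
    · rintro x ⟨v, rfl⟩
      exact ⟨Sum.elim v 0, by simp [Matrix.mulVecLin_apply]⟩
    · rintro x ⟨v, rfl⟩
      exact ⟨Sum.elim 0 v, by simp [Matrix.mulVecLin_apply]⟩

lemma inj_of_rank_eq {F : Type*} [Field F] {a b : ℕ} (A : Matrix (Fin a) (Fin b) F)
    (h : A.rank = b) : Function.Injective A.mulVecLin := by
  rw [← LinearMap.ker_eq_bot, ← Submodule.finrank_eq_zero (R := F)]
  have := LinearMap.finrank_range_add_finrank_ker A.mulVecLin
  rw [Module.finrank_fintype_fun_eq_card, Fintype.card_fin] at this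
  rw [Matrix.rank] at h
  omega

set_option maxHeartbeats 1600000 in
/-- Rate Exchange Lemma: if `rank [H11·M1 H12·M2] = rank [H11 H12·M2] = r`, `M1` has full
column rank `r - R2`, `M2` has full column rank `R2 ≥ 1`, and `M1' = [α M1]` satisfies
`rank (H11·M1') = r - R2 + 1`, then some `R2 - 1` columns of `M2` form a full column rank
matrix `M2'` with `span (H11·M1') ⊓ span (H12·M2') = {0}`. -/
theorem stmt_7 {F : Type*} [Field F] {m n1 n2 r R2 : ℕ}
    (H11 : Matrix (Fin m) (Fin n1) F) (H12 : Matrix (Fin m) (Fin n2) F)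
    (M1 : Matrix (Fin n1) (Fin (r - R2)) F) (M2 : Matrix (Fin n2) (Fin R2) F)
    (hR2pos : 1 ≤ R2) (hR2r : R2 ≤ r)
    (hM1 : M1.rank = r - R2) (hM2 : M2.rank = R2)
    (hr1 : (Matrix.fromCols (H11 * M1) (H12 * M2)).rank = r)
    (hr2 : (Matrix.fromCols H11 (H12 * M2)).rank = r)
    (α : Fin n1 → F)
    (hM1' : (H11 * Matrix.fromCols (Matrix.of fun i (_ : Fin 1) => α i) M1).rank
        = r - R2 + 1) :
    ∃ f : Fin (R2 - 1) → Fin R2, Function.Injective f ∧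
      (M2.submatrix id f).rank = R2 - 1 ∧
      LinearMap.range
          (H11 * Matrix.fromCols (Matrix.of fun i (_ : Fin 1) => α i) M1).mulVecLin ⊓
        LinearMap.range (H12 * M2.submatrix id f).mulVecLin = ⊥ := by
  classical
  set A : Submodule F (Fin m → F) := LinearMap.range (H11 * M1).mulVecLin with hA
  set B : Submodule F (Fin n2 → F) := LinearMap.range M2.mulVecLin with hBdef
  set B' : Submodule F (Fin m → F) := LinearMap.range (H12 * M2).mulVecLin with hB
  -- dimension counting on A, B'
  have hsupAB : Module.finrank F ↥(A ⊔ B') = r := by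
    rw [← range_fromColumns_mulVecLin, ← Matrix.rank, hr1]
  have hA_le : Module.finrank F A ≤ r - R2 := by
    have := (H11 * M1).rank_le_card_width
    rwa [Fintype.card_fin, Matrix.rank] at this
  have hB_le : Module.finrank F B' ≤ R2 := by
    have := (H12 * M2).rank_le_card_width
    rwa [Fintype.card_fin, Matrix.rank] at this
  have hsum := Submodule.finrank_sup_add_finrank_inf_eq A B'
  rw [hsupAB] at hsum
  have hA_eq : Module.finrank F A = r - R2 := by omega
  have hB_eq : Module.finrank F B' = R2 := by omega
  have hABbot : A ⊓ B' = ⊥ := by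
    rw [← Submodule.finrank_eq_zero (R := F)]; omega
  have hB'inj : Function.Injective (H12 * M2).mulVecLin :=
    inj_of_rank_eq _ (by rw [Matrix.rank, ← hB]; exact hB_eq)
  -- range H11 ⊔ B' = A ⊔ B'
  have hAleH : A ≤ LinearMap.range H11.mulVecLin := by
    rw [hA, Matrix.mulVecLin_mul]
    exact LinearMap.range_comp_le_range _ _
  have hsup_eq : A ⊔ B' = LinearMap.range H11.mulVecLin ⊔ B' := by
    apply Submodule.eq_of_le_of_finrank_le (sup_le_sup_right hAleH _)
    rw [hsupAB, ← hr2, Matrix.rank, range_fromColumns_mulVecLin]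
  -- decompose H11 α
  have hαmem : H11.mulVec α ∈ A ⊔ B' := by
    rw [hsup_eq]
    exact Submodule.mem_sup_left ⟨α, rfl⟩
  obtain ⟨u, hu, v, hv, huv⟩ := Submodule.mem_sup.mp hαmem
  -- the augmented column space
  set αc : Matrix (Fin n1) (Fin 1) F := Matrix.of fun i (_ : Fin 1) => α i with hαc
  have hcolmul : ∀ y : Fin 1 → F, (H11 * αc).mulVec y = y 0 • H11.mulVec α := by
    intro y
    funext i
    simp only [Matrix.mulVec, dotProduct, Fin.sum_univ_one, Pi.smul_apply, smul_eq_mul,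
      Matrix.mul_apply, hαc, Matrix.of_apply]
    rw [Finset.mul_sum, Finset.sum_mul]
    exact Finset.sum_congr rfl fun _ _ => by ring
  set W : Submodule F (Fin m → F) :=
    LinearMap.range (H11 * Matrix.fromCols αc M1).mulVecLin with hW
  have hWsup : W = LinearMap.range (H11 * αc).mulVecLin ⊔ A := by
    rw [hW, Matrix.mul_fromCols, range_fromColumns_mulVecLin]
  have hWrank : Module.finrank F W = r - R2 + 1 := by
    rw [hW, ← Matrix.rank]; exact hM1'
  -- H11 α ∉ A
  have hαnotA : H11.mulVec α ∉ A := by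
    intro hmem
    have hle : W ≤ A := by
      rw [hWsup, sup_le_iff]
      refine ⟨?_, le_refl A⟩
      rintro x ⟨y, rfl⟩
      rw [Matrix.mulVecLin_apply, hcolmul]
      exact Submodule.smul_mem _ _ hmem
    have := Submodule.finrank_mono hle
    omega
  -- v ∉ A, in particular its M2-coefficient vector is nonzero
  obtain ⟨c, hc⟩ : ∃ c, (H12 * M2).mulVec c = v := hv
  have hcne : c ≠ 0 := by
    rintro rfl
    rw [Matrix.mulVec_zero] at hc
    rw [← hc, add_zero] at huv
    exact hαnotA (huv ▸ hu)
  obtain ⟨k, hk⟩ : ∃ k, c k ≠ 0 := Function.ne_iff.mp hcne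
  -- construct f skipping column k
  set e : Fin (R2 - 1 + 1) ≃ Fin R2 := finCongr (by omega) with he
  set k0 : Fin (R2 - 1 + 1) := e.symm k with hk0
  set f : Fin (R2 - 1) → Fin R2 := fun i => e (k0.succAbove i) with hf
  have hfinj : Function.Injective f :=
    e.injective.comp (Fin.succAbove_right_injective)
  have hknot : ∀ i, f i ≠ k := by
    intro i hik
    rw [hf] at hik
    have : k0.succAbove i = k0 := by
      rw [hk0]; exact e.injective (by simpa using hik)
    exact Fin.succAbove_ne _ _ this
  -- selection matrix P
  set P : Matrix (Fin R2) (Fin (R2 - 1)) F :=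
    Matrix.of fun j i => if f i = j then (1 : F) else 0 with hP
  have hM2P : M2.submatrix id f = M2 * P := by
    ext j' i
    simp only [Matrix.submatrix_apply, id, Matrix.mul_apply, hP, Matrix.of_apply,
      mul_ite, mul_one, mul_zero]
    rw [Finset.sum_ite_eq Finset.univ (f i) (fun j => M2 j' j)]
    simp
  have hPmulVec : ∀ (d : Fin (R2 - 1) → F) (i0 : Fin (R2 - 1)),
      P.mulVec d (f i0) = d i0 := by
    intro d i0
    simp only [Matrix.mulVec, dotProduct, hP, Matrix.of_apply, ite_mul, one_mul, zero_mul,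
      hfinj.eq_iff]
    rw [Finset.sum_ite_eq' Finset.univ i0 (fun i => d i)]
    simp
  have hPk : ∀ d : Fin (R2 - 1) → F, P.mulVec d k = 0 := by
    intro d
    simp only [Matrix.mulVec, dotProduct, hP, Matrix.of_apply, ite_mul, one_mul, zero_mul]
    exact Finset.sum_eq_zero fun i _ => if_neg (hknot i)
  have hPinj : Function.Injective P.mulVecLin := by
    rw [← LinearMap.ker_eq_bot]
    rw [Submodule.eq_bot_iff]
    intro d hd
    funext i0
    have := congrFun hd (f i0)
    rwa [Matrix.mulVecLin_apply, hPmulVec d i0] at this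
  have hM2inj : Function.Injective M2.mulVecLin :=
    inj_of_rank_eq _ hM2
  refine ⟨f, hfinj, ?_, ?_⟩
  · -- rank of the submatrix
    have hcomp : Function.Injective (M2.mulVecLin.comp P.mulVecLin) := by
      rw [LinearMap.coe_comp]
      exact hM2inj.comp hPinj
    rw [hM2P, Matrix.rank, Matrix.mulVecLin_mul,
      LinearMap.finrank_range_of_inj hcomp,
      Module.finrank_fintype_fun_eq_card, Fintype.card_fin]
  · -- intersection is trivial
    rw [Submodule.eq_bot_iff]
    rintro x ⟨hxW, hxB'⟩
    -- decompose x from W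
    rw [hWsup] at hxW
    obtain ⟨t, ht, u1, hu1, htu⟩ := Submodule.mem_sup.mp hxW
    obtain ⟨y, rfl⟩ := ht
    rw [Matrix.mulVecLin_apply, hcolmul] at htu
    set a : F := y 0 with ha
    -- x from B' side
    obtain ⟨d, hd⟩ : ∃ d, (H12 * M2.submatrix id f).mulVec d = x := hxB'
    have hxB2 : x = (H12 * M2).mulVec (P.mulVec d) := by
      rw [← hd, hM2P, ← Matrix.mul_assoc, Matrix.mulVec_mulVec]
    -- show x - a • v ∈ A ⊓ B'
    have hmem : x - a • v ∈ A ⊓ B' := by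
      constructor
      · have : x - a • v = a • u + u1 := by
          rw [← htu, ← huv]
          module
        rw [this]
        exact Submodule.add_mem _ (Submodule.smul_mem _ _ hu) hu1
      · refine Submodule.sub_mem _ ?_ (Submodule.smul_mem _ _ ⟨c, hc⟩)
        exact ⟨P.mulVec d, hxB2.symm⟩
    rw [hABbot, Submodule.mem_bot, sub_eq_zero] at hmem
    -- conclude a = 0
    have hveq : (H12 * M2).mulVec (P.mulVec d) = (H12 * M2).mulVec (a • c) := by
      rw [← hxB2, hmem, ← hc, Matrix.mulVec_smul]
    have hcoef : P.mulVec d = a • c := hB'inj hveq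
    have : (0 : F) = a * c k := by
      have := congrFun hcoef k
      rwa [hPk] at this
    have ha0 : a = 0 := by
      rcases mul_eq_zero.mp this.symm with h | h
      · exact h
      · exact absurd h hk
    rw [hmem, ha0, zero_smul]
end

section
/- Let F be a field. Let H11 and H12 be matrices with the same number of rows such that rank([H11 H12]) = k, rank(H12) = c, and let M2 be a matrix with rank(H12·M2) = l. Then rank([H11 H12·M2]) ≥ k − c + l. -/
open Matrix

lemma range_fromColumns {F : Type*} [Field F] {m n1 n2 : ℕ}
    (A : Matrix (Fin m) (Fin n1) F) (B : Matrix (Fin m) (Fin n2) F) :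
    LinearMap.range (Matrix.fromCols A B).mulVecLin =
      LinearMap.range A.mulVecLin ⊔ LinearMap.range B.mulVecLin := by
  apply le_antisymm
  · rintro x ⟨v, rfl⟩
    have : v = Sum.elim (v ∘ Sum.inl) (v ∘ Sum.inr) := by
      ext (i | i) <;> rfl
    rw [mulVecLin_apply, this, fromCols_mulVec_sumElim]
    exact Submodule.add_mem_sup ⟨_, rfl⟩ ⟨_, rfl⟩
  · apply sup_le
    · rintro x ⟨v, rfl⟩
      exact ⟨Sum.elim v 0, by simp⟩
    · rintro x ⟨v, rfl⟩
      exact ⟨Sum.elim 0 v, by simp⟩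

/-- If `rank [H11 H12] = k`, `rank H12 = c`, and `rank (H12·M2) = l`, then
`rank [H11 H12·M2] ≥ k - c + l`. -/
theorem stmt_8 {F : Type*} [Field F] {m n1 n2 p k c l : ℕ}
    (H11 : Matrix (Fin m) (Fin n1) F) (H12 : Matrix (Fin m) (Fin n2) F)
    (M2 : Matrix (Fin n2) (Fin p) F)
    (hk : (Matrix.fromCols H11 H12).rank = k)
    (hc : H12.rank = c)
    (hl : (H12 * M2).rank = l) :
    (Matrix.fromCols H11 (H12 * M2)).rank ≥ k - c + l := by
  set R1 := LinearMap.range H11.mulVecLin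
  set R2 := LinearMap.range H12.mulVecLin
  set R3 := LinearMap.range (H12 * M2).mulVecLin
  have h32 : R3 ≤ R2 := by
    rintro x ⟨v, rfl⟩
    exact ⟨M2.mulVecLin v, by simp [R3, mulVecLin_mul]⟩
  have hsup : (R1 ⊔ R3) ⊔ R2 = R1 ⊔ R2 := by
    rw [sup_assoc, sup_eq_right.mpr h32]
  have hdim := Submodule.finrank_sup_add_finrank_inf_eq (R1 ⊔ R3) R2
  rw [hsup] at hdim
  have h3le : Module.finrank F R3 ≤ Module.finrank F ↥((R1 ⊔ R3) ⊓ R2) :=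
    Submodule.finrank_mono (le_inf le_sup_right h32)
  have hUeq : (Matrix.fromCols H11 (H12 * M2)).rank = Module.finrank F ↥(R1 ⊔ R3) := by
    rw [Matrix.rank, range_fromColumns]
  have hk' : Module.finrank F ↥(R1 ⊔ R2) = k := by
    rw [← hk, Matrix.rank, range_fromColumns]
  have hc' : Module.finrank F ↥R2 = c := hc
  have hl' : Module.finrank F ↥R3 = l := hl
  rw [hk', hc'] at hdim
  rw [hl'] at h3le
  rw [ge_iff_le, hUeq]
  have key : k + l ≤ Module.finrank F ↥(R1 ⊔ R3) + c := by
    calc k + l ≤ k + Module.finrank F ↥((R1 ⊔ R3) ⊓ R2) := by linarith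
      _ = Module.finrank F ↥(R1 ⊔ R3) + c := hdim
  have key2 : l ≤ Module.finrank F ↥(R1 ⊔ R3) :=
    le_trans h3le (Submodule.finrank_mono inf_le_left)
  omega
end

section
/- Let F be a field, H : Matrix (Fin m) (Fin n) F of rank at least r1, and B : Matrix (Fin m) (Fin p) F, with rank([H B]) = r. Then for any full column rank M with r1 columns satisfying rank([H·M B]) = r, it holds that rank(H·M) = r1 and span(H·M) ∩ span(B) = {0}, provided r1 + rank(B) = r. -/
lemma range_fromColumns_aux {F : Type*} [Field F] {m n p : ℕ}
    (A : Matrix (Fin m) (Fin n) F) (B : Matrix (Fin m) (Fin p) F) :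
    LinearMap.range (Matrix.fromCols A B).mulVecLin =
      LinearMap.range A.mulVecLin ⊔ LinearMap.range B.mulVecLin := by
  apply le_antisymm
  · rintro _ ⟨v, rfl⟩
    have : (Matrix.fromCols A B).mulVecLin v
        = A.mulVecLin (v ∘ Sum.inl) + B.mulVecLin (v ∘ Sum.inr) := by
      have := Matrix.fromCols_mulVec_sumElim A B (v ∘ Sum.inl) (v ∘ Sum.inr)
      simpa [Matrix.mulVecLin_apply, Sum.elim_comp_inl_inr] using this
    rw [this]
    exact Submodule.add_mem _ (Submodule.mem_sup_left ⟨_, rfl⟩)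
      (Submodule.mem_sup_right ⟨_, rfl⟩)
  · rw [sup_le_iff]
    constructor
    · rintro _ ⟨v, rfl⟩
      refine ⟨Sum.elim v 0, ?_⟩
      simp [Matrix.mulVecLin_apply, Matrix.fromCols_mulVec_sumElim]
    · rintro _ ⟨v, rfl⟩
      refine ⟨Sum.elim 0 v, ?_⟩
      simp [Matrix.mulVecLin_apply, Matrix.fromCols_mulVec_sumElim]

/-- Squeeze argument: if `rank H ≥ r1`, `rank [H B] = r`, `M` has full column rank `r1`,
`rank [H·M B] = r` and `r1 + rank B = r`, then `rank (H·M) = r1` and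
`span (H·M) ⊓ span B = {0}`. -/
theorem stmt_13 {F : Type*} [Field F] {m n p r1 r : ℕ}
    (H : Matrix (Fin m) (Fin n) F) (B : Matrix (Fin m) (Fin p) F)
    (hH : H.rank ≥ r1)
    (hr : (Matrix.fromCols H B).rank = r)
    (M : Matrix (Fin n) (Fin r1) F)
    (hM : M.rank = r1)
    (hHM : (Matrix.fromCols (H * M) B).rank = r)
    (hsum : r1 + B.rank = r) :
    (H * M).rank = r1 ∧
      LinearMap.range (H * M).mulVecLin ⊓ LinearMap.range B.mulVecLin = ⊥ := by
  set S := LinearMap.range (H * M).mulVecLin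
  set T := LinearMap.range B.mulVecLin
  have hS : (H * M).rank = Module.finrank F S := rfl
  have hT : B.rank = Module.finrank F T := rfl
  have hsup : Module.finrank F (S ⊔ T : Submodule F (Fin m → F)) = r := by
    rw [← range_fromColumns_aux]; exact hHM
  have hle : (H * M).rank ≤ r1 := by have := Matrix.rank_mul_le_right H M; omega
  have key := Submodule.finrank_sup_add_finrank_inf_eq S T
  rw [hsup] at key
  -- r + finrank inf = rank(HM) + rank B ≤ r1 + rank B = r
  have h2 : Module.finrank F S + Module.finrank F T ≤ r := by
    rw [← hS, ← hT, ← hsum]; omega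
  have hinf : Module.finrank F (S ⊓ T : Submodule F (Fin m → F)) = 0 := by omega
  have hSr : Module.finrank F S = r1 := by rw [← hS] at *; omega
  refine ⟨by rw [hS, hSr], ?_⟩
  exact Submodule.finrank_eq_zero.mp hinf
end
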